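/- Let q be a prime power and p a prime with p ∤ q. If q is not a primitive root modulo p and p > 2q−2, then μ(F_q,p) ≤ p. -/

import Mathlib

open Polynomial

/-- The ring R(F,n) = F[X]/(X^n - 1). -/
abbrev CycRing (F : Type*) [Field F] (n : ℕ) := AdjoinRoot (X ^ n - Polynomial.C (1 : F))

/-- The unique representative of degree < n of an element of F[X]/(X^n-1). -/
noncomputable def cycRep {F : Type*} [Field F] {n : ℕ} (f : CycRing F n) : F[X] :=
  if h : n = 0 then 0
  else AdjoinRoot.modByMonicHom (monic_X_pow_sub_C (1 : F) h) f

/-- Hamming weight of an element of F[X]/(X^n-1): the number of nonzero coefficients of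
its representative of degree < n. -/
noncomputable def cycWt {F : Type*} [Field F] {n : ℕ} (f : CycRing F n) : ℕ :=
  (cycRep f).support.card

/-- Minimum distance of a cyclic code (ideal of F[X]/(X^n-1)). -/
noncomputable def cycDist {F : Type*} [Field F] {n : ℕ} (I : Ideal (CycRing F n)) : ℕ :=
  sInf {w | ∃ f ∈ I, f ≠ 0 ∧ cycWt f = w}

/-- Dimension of a cyclic code as an F-vector space. -/
noncomputable def cycDim (F : Type*) [Field F] {n : ℕ} (I : Ideal (CycRing F n)) : ℕ :=
  Module.finrank F (Submodule.restrictScalars F I)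

/-- The invariant μ(F,n). -/
noncomputable def mu (F : Type*) [Field F] (n : ℕ) : ℕ :=
  sInf {w | ∃ f : CycRing F n, f ≠ 0 ∧
    cycDist (Ideal.span {f}) + cycDim F (Ideal.span {f}) = w}

/-- Hamming weight of a vector: its number of nonzero coordinates. -/
noncomputable def wt {ι α : Type*} [Zero α] (v : ι → α) : ℕ := Set.ncard {i | v i ≠ 0}

/-- Minimum distance of a linear code of length N over F. -/
noncomputable def codeDist {F : Type*} [Field F] {N : ℕ} (Cd : Submodule F (Fin N → F)) : ℕ :=
  sInf {w | ∃ x ∈ Cd, x ≠ 0 ∧ wt x = w}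


lemma arc_bound {F : Type*} [Field F] [Fintype F] (k : ℕ) (hk : 2 ≤ k) :
    ∀ (V : Type v) [AddCommGroup V] [Module F V] [FiniteDimensional F V],
      Module.finrank F V ≤ k → ∀ (N : ℕ) (v : Fin N → V),
      (∀ (s : Finset (Fin N)) (g : Fin N → F), s.card = k →
        (∑ i ∈ s, g i • v i) = 0 → ∀ i ∈ s, g i = 0) →
      N ≤ Fintype.card F + k - 1 := by
  induction k, hk using Nat.le_induction with
  | base =>
    intro V _ _ _ hrk N v hind
    classical
    by_contra hN
    push_neg at hN
    have hq2 : 2 ≤ Fintype.card F := Fintype.one_lt_card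
    have hN2 : Fintype.card F + 2 ≤ N := by omega
    -- all vectors nonzero
    have hnz : ∀ i, v i ≠ 0 := by
      intro i hvi
      obtain ⟨t, hsub, hcard⟩ := Finset.exists_superset_card_eq
        (s := {i}) (n := 2) (by simp) (by simpa using (by omega : 2 ≤ N))
      have := hind t (fun x => if x = i then 1 else 0) hcard
        (by
          rw [Finset.sum_eq_single_of_mem i (hsub (Finset.mem_singleton_self i))
            (fun b _ hb => by simp [hb])]
          simp [hvi]) i (hsub (Finset.mem_singleton_self i))
      simp at this
    haveI : Finite V := Module.finite_of_finite F
    haveI : Fintype V := Fintype.ofFinite V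
    -- injection
    set φ : Fin N × {c : F // c ≠ 0} → {x : V // x ≠ 0} :=
      fun ic => ⟨ic.2.1 • v ic.1, smul_ne_zero ic.2.2 (hnz ic.1)⟩ with hφ
    have hinj : Function.Injective φ := by
      rintro ⟨i, c, hc⟩ ⟨j, c', hc'⟩ h
      simp only [hφ, Subtype.mk_eq_mk] at h
      rcases eq_or_ne i j with rfl | hij
      · have : (c - c') • v i = 0 := by rw [sub_smul, h, sub_self]
        rcases smul_eq_zero.mp this with h0 | h0
        · simp [sub_eq_zero.mp h0]
        · exact absurd h0 (hnz i)
      · exfalso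
        have := hind {i, j} (fun x => if x = i then c else -c') (by
          rw [Finset.card_insert_of_notMem (by simpa using hij), Finset.card_singleton])
          (by
            rw [Finset.sum_insert (by simpa using hij), Finset.sum_singleton]
            show (if i = i then c else -c') • v i + (if j = i then c else -c') • v j = 0
            rw [if_pos rfl, if_neg (show ¬(j = i) from fun hc => hij hc.symm),
              h, neg_smul, add_neg_cancel]) i (by simp)
        simp [hc] at this
    have hcard := Fintype.card_le_of_injective φ hinj
    rw [Fintype.card_prod, Fintype.card_subtype_compl, Fintype.card_subtype_eq,
        Fintype.card_subtype_compl, Fintype.card_subtype_eq, Fintype.card_fin] at hcard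
    have hV : Fintype.card V = Fintype.card F ^ Module.finrank F V := Module.card_eq_pow_finrank
    have hVle : Fintype.card V ≤ Fintype.card F ^ 2 := by
      rw [hV]; exact Nat.pow_le_pow_right (by omega) hrk
    set q := Fintype.card F
    have h1 : (q + 2) * (q - 1) ≤ N * (q - 1) := Nat.mul_le_mul_right _ (by omega)
    have h2 : N * (q - 1) ≤ q ^ 2 - 1 := le_trans hcard (by omega)
    set a := q - 1 with haa
    have ha : q = a + 1 := by omega
    have e1 : (q + 2) * (q - 1) = a * a + 3 * a := by rw [ha]; simp [haa]; ring
    have e2 : q ^ 2 = a * a + 2 * a + 1 := by rw [ha]; ring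
    have e3 : q ^ 2 - 1 = a * a + 2 * a := by rw [e2]; simp
    have ha1 : 1 ≤ a := by omega
    rw [e1] at h1
    rw [e3] at h2
    linarith
  | succ k hk ih =>
    intro V _ _ _ hrk N v hind
    classical
    by_contra hN
    push_neg at hN
    have hq2 : 2 ≤ Fintype.card F := Fintype.one_lt_card
    have hNn : Fintype.card F + k + 1 ≤ N := by omega
    have hkN : k + 1 ≤ N := by omega
    set last : Fin N := ⟨N - 1, by omega⟩ with hlast
    -- v last ≠ 0
    have hvl : v last ≠ 0 := by
      intro hv0
      obtain ⟨t, hsub, hcard⟩ := Finset.exists_superset_card_eq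
        (s := {last}) (n := k + 1) (by simp) (by simpa using hkN)
      have := hind t (fun x => if x = last then 1 else 0) hcard
        (by
          rw [Finset.sum_eq_single_of_mem last (hsub (Finset.mem_singleton_self last))
            (fun b _ hb => by simp [hb])]
          simp [hv0]) last (hsub (Finset.mem_singleton_self last))
      simp at this
    have hrkW : Module.finrank F (V ⧸ (Submodule.span F {v last})) ≤ k := by
      have := Submodule.finrank_quotient_add_finrank (Submodule.span F {v last})
      rw [finrank_span_singleton hvl] at this
      omega
    set e : Fin (N-1) → Fin N := Fin.castLE (by omega) with he
    have helast : ∀ i : Fin (N-1), e i ≠ last := by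
      intro i hc
      have : (i : ℕ) < N - 1 := i.isLt
      rw [show e i = ⟨(i:ℕ), by omega⟩ from rfl] at hc
      simp only [hlast, Fin.mk.injEq] at hc
      omega
    have heinj : Function.Injective e := Fin.castLE_injective _
    set v' : Fin (N-1) → (V ⧸ (Submodule.span F {v last})) :=
      fun i => Submodule.Quotient.mk (v (e i)) with hv'
    have hind' : ∀ (s' : Finset (Fin (N-1))) (g' : Fin (N-1) → F), s'.card = k →
        (∑ i ∈ s', g' i • v' i) = 0 → ∀ i ∈ s', g' i = 0 := by
      intro s' g' hcard' hsum' i0 hi0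
      have hmem : (∑ i ∈ s', g' i • v (e i)) ∈ Submodule.span F {v last} := by
        rw [← Submodule.Quotient.mk_eq_zero]
        have hmk : Submodule.Quotient.mk (∑ i ∈ s', g' i • v (e i))
            = ∑ i ∈ s', g' i • v' i := by
          rw [show (Submodule.Quotient.mk : V → V ⧸ (Submodule.span F {v last}))
            = (Submodule.span F {v last}).mkQ from rfl, map_sum]
          simp [hv']
        rw [hmk, hsum']
      obtain ⟨a, ha⟩ := Submodule.mem_span_singleton.mp hmem
      set s : Finset (Fin N) := insert last (s'.image e) with hs
      have hlnotmem : last ∉ s'.image e := by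
        intro hc
        obtain ⟨i, _, hi⟩ := Finset.mem_image.mp hc
        exact helast i hi
      have hscard : s.card = k + 1 := by
        rw [hs, Finset.card_insert_of_notMem hlnotmem,
          Finset.card_image_of_injective _ heinj, hcard']
      set g : Fin N → F := fun j => if hj : (j : ℕ) < N - 1 then g' ⟨(j:ℕ), hj⟩ else -a with hg
      have hge : ∀ i : Fin (N-1), g (e i) = g' i := by
        intro i
        simp only [hg]
        rw [dif_pos (show ((e i : Fin N) : ℕ) < N - 1 from i.isLt)]
        congr 1
      have hglast : g last = -a := by
        simp only [hg, hlast]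
        rw [dif_neg (by simp)]
      have hsum : ∑ j ∈ s, g j • v j = 0 := by
        rw [hs, Finset.sum_insert hlnotmem, Finset.sum_image (fun x _ y _ h => heinj h)]
        have : ∑ i ∈ s', g (e i) • v (e i) = ∑ i ∈ s', g' i • v (e i) := by
          exact Finset.sum_congr rfl fun i _ => by rw [hge i]
        rw [this, ← ha, hglast, neg_smul, neg_add_cancel]
      have := hind s g hscard hsum (e i0) (by
        rw [hs]; exact Finset.mem_insert_of_mem (Finset.mem_image_of_mem e hi0))
      rw [hge i0] at this
      exact this
    have := ih (V ⧸ (Submodule.span F {v last})) hrkW (N - 1) v' hind'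
    omega


open IntermediateField in
set_option maxHeartbeats 1000000 in
/-- Unconditionally, if q is not a primitive root modulo p and p > 2q−2,
then μ(F_q,p) ≤ p. -/
theorem mu_le_unconditional (q p : ℕ) (F : Type*) [Field F] [Fintype F]
    (hq : Fintype.card F = q) (hp : p.Prime) (hpq : ¬ p ∣ q)
    (hnotprim : orderOf ((q : ZMod p)) ≠ p - 1)
    (hbig : 2 * q - 2 < p) :
    mu F p ≤ p := by

  classical
  haveI : Fact p.Prime := ⟨hp⟩
  haveI : NeZero p := ⟨hp.pos.ne'⟩
  have hq2 : 2 ≤ q := hq ▸ Fintype.one_lt_card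
  have hp3 : 3 ≤ p := by omega
  -- char of F
  have hcharF : ¬ (ringChar F) ∣ p ∨ True := Or.inr trivial
  have hPF : NeZero ((p : ℕ) : F) := by
    constructor
    intro h0
    have hdvd : ringChar F ∣ p := (CharP.cast_eq_zero_iff F (ringChar F) p).mp h0
    obtain ⟨n, hrprime, hcard⟩ := FiniteField.card F (ringChar F)
    have : ringChar F = p := ((Nat.prime_dvd_prime_iff_eq hrprime hp).mp hdvd)
    apply hpq
    rw [← hq, hcard, this]
    exact dvd_pow_self p n.2.ne'
  -- cyclotomic field
  set pp : ℕ+ := ⟨p, hp.pos⟩ with hpp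
  haveI : NeZero ((pp : ℕ) : F) := hPF
  set K := CyclotomicField (pp : ℕ) F with hK
  obtain ⟨ζ, hζ⟩ := IsCyclotomicExtension.exists_isPrimitiveRoot F K (show (pp : ℕ) ∈ ({(pp : ℕ)} : Set ℕ) from rfl) hp.pos.ne'
  have hζ : IsPrimitiveRoot ζ p := hζ
  haveI : FiniteDimensional F K := IsCyclotomicExtension.finiteDimensional ({(pp : ℕ)} : Set ℕ) F K
  have hζord : orderOf ζ = p := (hζ.eq_orderOf).symm
  have hζp : ζ ^ p = 1 := hζ.pow_eq_one
  have hζne : ζ ≠ 0 := hζ.ne_zero hp.pos.ne'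
  -- order e of q mod p
  set e := orderOf ((q : ZMod p)) with hee
  have hqz : (q : ZMod p) ≠ 0 := by
    rw [Ne, ZMod.natCast_eq_zero_iff]; exact hpq
  have hqpow : ((q : ZMod p)) ^ (p - 1) = 1 := ZMod.pow_card_sub_one_eq_one hqz
  have hepos : 0 < e :=
    orderOf_pos_iff.mpr (isOfFinOrder_iff_pow_eq_one.mpr ⟨p - 1, by omega, hqpow⟩)
  have hedvd : e ∣ p - 1 := orderOf_dvd_of_pow_eq_one hqpow
  have hehalf : 2 * e ≤ p - 1 := by
    obtain ⟨t, ht⟩ := hedvd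
    rcases t with _ | _ | t
    · omega
    · exfalso; exact hnotprim (by omega)
    · have h2 : 2 * e ≤ e * (t + 1 + 1) := by nlinarith
      omega
  -- power congruences
  have hζpow : ∀ a b : ℕ, a ≡ b [MOD p] → ζ ^ a = ζ ^ b := by
    intro a b hab
    calc ζ ^ a = ζ ^ (a % orderOf ζ) := (pow_mod_orderOf ζ a).symm
      _ = ζ ^ (b % orderOf ζ) := by rw [hζord]; unfold Nat.ModEq at hab; rw [hab]
      _ = ζ ^ b := pow_mod_orderOf ζ b
  have hqmodpow : ∀ j : ℕ, ζ ^ (q ^ j) = ζ ^ (q ^ (j % e)) := by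
    intro j
    apply hζpow
    rw [← ZMod.natCast_eq_natCast_iff]
    push_cast
    rw [hee]
    exact (pow_mod_orderOf _ _).symm
  -- minpoly degree d
  have hint : IsIntegral F ζ := IsIntegral.of_finite F ζ
  set d := (minpoly F ζ).natDegree with hd
  have hd1 : 0 < d := minpoly.natDegree_pos hint
  have hd2 : 2 ≤ d := by
    by_contra hc
    have hdone : Module.finrank F (↥F⟮ζ⟯) = 1 := by
      rw [IntermediateField.adjoin.finrank hint]; omega
    have hbot : F⟮ζ⟯ = ⊥ := IntermediateField.finrank_eq_one_iff.mp hdone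
    have hmem : ζ ∈ (⊥ : IntermediateField F K) := by
      rw [← hbot]; exact IntermediateField.mem_adjoin_simple_self F ζ
    obtain ⟨y, hy⟩ := IntermediateField.mem_bot.mp hmem
    have hy0 : y ≠ 0 := by
      intro h0; rw [h0, map_zero] at hy; exact hζne hy.symm
    have hyord : orderOf y = p := by
      rw [← hζord, ← hy]
      exact (orderOf_injective (algebraMap F K).toMonoidHom
        (fun a b hab => (algebraMap F K).injective hab) y).symm
    have hypow : y ^ (q - 1) = 1 := by
      have := FiniteField.pow_card_sub_one_eq_one y hy0
      rwa [hq] at this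
    have : p ∣ q - 1 := by rw [← hyord]; exact orderOf_dvd_of_pow_eq_one hypow
    have := Nat.le_of_dvd (by omega) this
    omega
  -- Frobenius x ↦ x^q on K
  haveI : Finite K := Module.finite_of_finite F
  haveI : Fintype K := Fintype.ofFinite K
  set r := ringChar F with hr
  obtain ⟨m, hrprime, hcard⟩ := FiniteField.card F r
  haveI : CharP K r := charP_of_injective_algebraMap (algebraMap F K).injective r
  haveI : ExpChar K r := ExpChar.prime hrprime
  set φ : K →+* K := iterateFrobenius K r (m : ℕ) with hφ
  have hφapp : ∀ x : K, φ x = x ^ q := by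
    intro x; rw [hφ, iterateFrobenius_def, ← hcard, hq]
  -- the Frobenius orbit of ζ
  set S : Finset K := (Finset.range e).image (fun j => ζ ^ (q ^ j)) with hS
  have hζS : ζ ∈ S := by
    rw [hS]
    exact Finset.mem_image.mpr ⟨0, Finset.mem_range.mpr hepos, by rw [pow_zero, pow_one]⟩
  have hSq : ∀ x ∈ S, x ^ q ∈ S := by
    intro x hx
    rw [hS] at hx ⊢
    obtain ⟨j, hj, rfl⟩ := Finset.mem_image.mp hx
    refine Finset.mem_image.mpr ⟨(j+1) % e, Finset.mem_range.mpr (Nat.mod_lt _ hepos), ?_⟩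
    rw [← pow_mul, ← pow_succ]
    exact (hqmodpow (j+1)).symm
  have hScard : S.card ≤ e := le_trans (Finset.card_image_le) (by rw [Finset.card_range])
  set g : K[X] := ∏ x ∈ S, (X - C x) with hg
  have hgmonic : g.Monic := monic_prod_of_monic _ _ (fun x _ => monic_X_sub_C x)
  have hgdeg : g.natDegree = S.card := by
    rw [hg, natDegree_prod _ _ (fun x _ => X_sub_C_ne_zero x)]
    simp [natDegree_X_sub_C]
  have hmapg : g.map φ = g := by
    rw [hg, Polynomial.map_prod]
    have h1 : ∀ x ∈ S, (X - C x).map φ = X - C (x ^ q) := by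
      intro x hx
      rw [Polynomial.map_sub, Polynomial.map_X, Polynomial.map_C, hφapp]
    rw [Finset.prod_congr rfl h1]
    have hinj : Set.InjOn (fun x : K => x ^ q) S := by
      intro a _ b _ hab
      have : φ a = φ b := by rw [hφapp, hφapp]; exact hab
      exact φ.injective this
    have himg : S.image (fun x : K => x ^ q) = S := by
      refine (Finset.eq_of_subset_of_card_le ?_ ?_).symm.symm
      · intro y hy
        obtain ⟨x, hx, rfl⟩ := Finset.mem_image.mp hy
        exact hSq x hx
      · rw [Finset.card_image_of_injOn hinj]
    calc ∏ x ∈ S, (X - C (x ^ q)) = ∏ y ∈ S.image (fun x : K => x ^ q), (X - C y) := by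
          rw [Finset.prod_image hinj]
      _ = ∏ x ∈ S, (X - C x) := by rw [himg]
  have hcoeff_fix : ∀ i, (g.coeff i) ^ q = g.coeff i := by
    intro i
    have := congrArg (fun P : K[X] => P.coeff i) hmapg
    simpa [Polynomial.coeff_map, hφapp] using this
  have hfix : ∀ x : K, x ^ q = x → x ∈ Set.range (algebraMap F K) := by
    intro x hx
    set T : Finset K := Finset.univ.image (algebraMap F K) with hT
    have hTcard : T.card = q := by
      rw [hT, Finset.card_image_of_injective _ (algebraMap F K).injective,
        Finset.card_univ, hq]
    set P : K[X] := X ^ q - X with hP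
    have hPcoeff : P.coeff q = 1 := by
      rw [hP, Polynomial.coeff_sub, Polynomial.coeff_X_pow, if_pos rfl, Polynomial.coeff_X,
        if_neg (by omega), sub_zero]
    have hPne : P ≠ 0 := fun h => by simp [h] at hPcoeff
    have hPdeg : P.natDegree ≤ q :=
      le_trans (Polynomial.natDegree_sub_le _ _)
        (by simp [natDegree_X_pow, natDegree_X]; omega)
    have hTsub : T ⊆ P.roots.toFinset := by
      intro y hy
      obtain ⟨a, _, rfl⟩ := Finset.mem_image.mp hy
      rw [Multiset.mem_toFinset, Polynomial.mem_roots hPne]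
      have hax : ((algebraMap F K) a) ^ q = (algebraMap F K) a := by
        rw [← map_pow]
        congr 1
        have := FiniteField.pow_card a
        rwa [hq] at this
      show Polynomial.IsRoot P ((algebraMap F K) a)
      simp [hP, Polynomial.IsRoot, hax]
    have hcardroots : P.roots.toFinset.card ≤ q :=
      le_trans (Multiset.toFinset_card_le _) (le_trans (Polynomial.card_roots' P) hPdeg)
    have hTeq : T = P.roots.toFinset := Finset.eq_of_subset_of_card_le hTsub (by omega)
    have hxroot : x ∈ P.roots.toFinset := by
      rw [Multiset.mem_toFinset, Polynomial.mem_roots hPne]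
      show Polynomial.IsRoot P x
      simp [hP, Polynomial.IsRoot, hx]
    rw [← hTeq] at hxroot
    obtain ⟨a, _, ha⟩ := Finset.mem_image.mp hxroot
    exact ⟨a, ha⟩
  -- lift g to F[X]
  have hglifts : g ∈ Polynomial.lifts (algebraMap F K) :=
    (lifts_iff_coeff_lifts g).mpr (fun n => hfix _ (hcoeff_fix n))
  obtain ⟨g₀, hg₀map, hg₀deg, hg₀monic⟩ := lifts_and_natDegree_eq_and_monic hglifts hgmonic
  have haev : aeval ζ g₀ = 0 := by
    rw [aeval_def, ← Polynomial.eval_map, hg₀map, hg]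
    rw [Polynomial.eval_prod]
    refine Finset.prod_eq_zero hζS ?_
    simp
  have hde : d ≤ e := by
    have hmin := minpoly.min F ζ hg₀monic haev
    have : d ≤ g₀.natDegree := Polynomial.natDegree_le_natDegree hmin
    omega
  -- arc bound application
  haveI hfinV : FiniteDimensional F (↥F⟮ζ⟯) := inferInstance
  have hrkV : Module.finrank F (↥F⟮ζ⟯) = d := IntermediateField.adjoin.finrank hint
  set gen : ↥F⟮ζ⟯ := IntermediateField.AdjoinSimple.gen F ζ with hgen
  set vv : Fin p → ↥F⟮ζ⟯ := fun i => gen ^ (i : ℕ) with hvv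
  have harc : ¬ (∀ (t : Finset (Fin p)) (gg : Fin p → F), t.card = d →
      (∑ i ∈ t, gg i • vv i) = 0 → ∀ i ∈ t, gg i = 0) := by
    intro hcon
    have := arc_bound d hd2 (↥F⟮ζ⟯) (le_of_eq hrkV) p vv hcon
    rw [hq] at this
    omega
  push_neg at harc
  obtain ⟨s, gg, hscard, hsum, i0, hi0, hgi0⟩ := harc
  -- the polynomial c
  set c : F[X] := ∑ i ∈ s, Polynomial.monomial (i : ℕ) (gg i) with hc
  have hcoeffc : ∀ j : Fin p, j ∈ s → c.coeff (j : ℕ) = gg j := by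
    intro j hj
    rw [hc, Polynomial.finset_sum_coeff,
      Finset.sum_eq_single_of_mem j hj
        (fun b _ hbj => by
          rw [Polynomial.coeff_monomial, if_neg (fun hh => hbj (Fin.ext hh))]),
      Polynomial.coeff_monomial, if_pos rfl]
  have hcne : c ≠ 0 := fun h0 => hgi0 (by rw [← hcoeffc i0 hi0, h0, Polynomial.coeff_zero])
  have hcsupp : c.support ⊆ s.image (fun i : Fin p => (i : ℕ)) := by
    intro n hn
    by_contra hmem
    apply Polynomial.mem_support_iff.mp hn
    rw [hc, Polynomial.finset_sum_coeff]
    apply Finset.sum_eq_zero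
    intro i hi
    rw [Polynomial.coeff_monomial, if_neg]
    intro hh
    exact hmem (Finset.mem_image.mpr ⟨i, hi, hh⟩)
  have hcsuppcard : c.support.card ≤ d := by
    calc c.support.card ≤ (s.image (fun i : Fin p => (i : ℕ))).card :=
          Finset.card_le_card hcsupp
      _ ≤ s.card := Finset.card_image_le
      _ = d := hscard
  have hcdeg : c.degree < (p : ℕ) := by
    rw [hc]
    refine lt_of_le_of_lt (Polynomial.degree_sum_le _ _) ?_
    rw [Finset.sup_lt_iff (show (⊥ : WithBot ℕ) < (p : ℕ) from WithBot.bot_lt_coe _)]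
    intro i _
    refine lt_of_le_of_lt (Polynomial.degree_monomial_le _ _) ?_
    exact_mod_cast i.isLt
  have hcnatdeg : c.natDegree < p := (Polynomial.natDegree_lt_iff_degree_lt hcne).mpr hcdeg
  have hcaev : aeval ζ c = 0 := by
    have h1 : ∑ i ∈ s, gg i • (ζ ^ (i : ℕ)) = 0 := by
      have hval := congrArg (F⟮ζ⟯.val.toLinearMap) hsum
      rw [map_sum, map_zero] at hval
      rw [← hval]
      refine Finset.sum_congr rfl fun i _ => ?_
      rw [LinearMap.map_smul]
      rfl
    rw [hc, map_sum, ← h1]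
    refine Finset.sum_congr rfl fun i _ => ?_
    rw [Polynomial.aeval_monomial, ← Algebra.smul_def]
  -- the element f of the cyclic ring
  set Xp : F[X] := X ^ p - Polynomial.C (1:F) with hXp
  have hXpmonic : Xp.Monic := monic_X_pow_sub_C (1:F) (by omega)
  have hXpdeg : Xp.natDegree = p := natDegree_X_pow_sub_C
  set f : CycRing F p := AdjoinRoot.mk Xp c with hf
  have hfne : f ≠ 0 := by
    rw [hf, Ne, AdjoinRoot.mk_eq_zero]
    intro hdvd
    exact hcne (Polynomial.eq_zero_of_dvd_of_natDegree_lt hdvd (by rw [hXpdeg]; exact hcnatdeg))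
  -- weight bound
  have hwt : cycWt f ≤ d := by
    rw [cycWt, cycRep, dif_neg (by omega : ¬ p = 0), hf, AdjoinRoot.modByMonicHom_mk,
      (Polynomial.modByMonic_eq_self_iff (monic_X_pow_sub_C (1:F) (by omega : ¬ p = 0))).mpr
        (by rw [Polynomial.degree_X_pow_sub_C (by omega : 0 < p)]; exact hcdeg)]
    exact hcsuppcard
  have hdistle : cycDist (Ideal.span {f}) ≤ d :=
    le_trans (Nat.sInf_le ⟨f, Submodule.mem_span_singleton_self f, hfne, rfl⟩) hwt
  -- dimension bound
  set pb : PowerBasis F (CycRing F p) := AdjoinRoot.powerBasis' hXpmonic with hpb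
  haveI : Module.Finite F (CycRing F p) := Module.Finite.of_basis pb.basis
  have hrkR : Module.finrank F (CycRing F p) = p := by
    rw [pb.finrank]
    show (AdjoinRoot.powerBasis' hXpmonic).dim = p
    rw [AdjoinRoot.powerBasis'_dim, hXpdeg]
  have hroot : aeval ζ Xp = 0 := by
    rw [hXp, map_sub, map_pow, aeval_X, aeval_C, hζp, map_one, sub_self]
  set ψ : CycRing F p →ₐ[F] K := AdjoinRoot.liftAlgHom Xp (Algebra.ofId F K) ζ hroot with hψ
  have hψf : ψ f = 0 := by rw [hψ, hf]; exact hcaev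
  have hker : Submodule.restrictScalars F (Ideal.span {f}) ≤ LinearMap.ker ψ.toLinearMap := by
    intro x hx
    have hx' : x ∈ Ideal.span {f} := hx
    obtain ⟨a, ha⟩ := Ideal.mem_span_singleton'.mp hx'
    rw [LinearMap.mem_ker]
    show ψ x = 0
    rw [← ha, map_mul, hψf, mul_zero]
  have hdim : cycDim F (Ideal.span {f}) ≤ p - d := by
    rw [cycDim]
    have hrn := Submodule.finrank_quotient_add_finrank
      (Submodule.restrictScalars F (Ideal.span {f}))
    rw [hrkR] at hrn
    set L := Submodule.liftQ (Submodule.restrictScalars F (Ideal.span {f}))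
      ψ.toLinearMap hker with hL
    have hrange : LinearMap.range L = LinearMap.range ψ.toLinearMap :=
      Submodule.range_liftQ _ _ _
    have hsub : (Subalgebra.toSubmodule (F⟮ζ⟯.toSubalgebra)) ≤
        LinearMap.range ψ.toLinearMap := by
      have hadj : Algebra.adjoin F {ζ} ≤ ψ.range := Algebra.adjoin_le (by
        intro z hz
        rw [Set.mem_singleton_iff] at hz
        subst hz
        exact ⟨AdjoinRoot.root Xp, AdjoinRoot.liftAlgHom_root Xp (Algebra.ofId F K) _ hroot⟩)
      intro x hx
      have hx' : x ∈ F⟮ζ⟯.toSubalgebra := hx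
      rw [IntermediateField.adjoin_simple_toSubalgebra_of_isAlgebraic hint.isAlgebraic] at hx'
      obtain ⟨y, hy⟩ := hadj hx'
      exact ⟨y, hy⟩
    have h1 : Module.finrank F ↥(Subalgebra.toSubmodule (F⟮ζ⟯.toSubalgebra)) = d := hrkV
    have hdle : d ≤ Module.finrank F ↥(LinearMap.range ψ.toLinearMap) := by
      rw [← h1]
      exact Submodule.finrank_mono hsub
    have hQ : d ≤ Module.finrank F
        (CycRing F p ⧸ (Submodule.restrictScalars F (Ideal.span {f}))) := by
      calc d ≤ Module.finrank F ↥(LinearMap.range ψ.toLinearMap) := hdle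
        _ = Module.finrank F ↥(LinearMap.range L) := by rw [hrange]
        _ ≤ _ := LinearMap.finrank_range_le L
    omega
  -- conclusion
  have hmu : mu F p ≤ cycDist (Ideal.span {f}) + cycDim F (Ideal.span {f}) :=
    Nat.sInf_le ⟨f, hfne, rfl⟩
  have hfin : cycDist (Ideal.span {f}) + cycDim F (Ideal.span {f}) ≤ p := by omega
  exact le_trans hmu hfin
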